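/- For angles φ₁, φ₂ ∈ [-φₘ, φₘ] with 0 < φₘ ≤ π/18, and any angle δ, the quantity A = cos(δ)·cos(φ₁)·cos(φ₂) + sin(φ₁)·sin(φ₂) satisfies A ≤ (cos(δ) - 1)·cos²(φₘ) + 1. -/
import Mathlib

open Real

theorem length_constraint_upper_bound
    (φm φ1 φ2 δ : ℝ) (hφm : 0 < φm) (hφm' : φm ≤ π / 18)
    (h1 : φ1 ∈ Set.Icc (-φm) φm) (h2 : φ2 ∈ Set.Icc (-φm) φm) :
    cos δ * cos φ1 * cos φ2 + sin φ1 * sin φ2 ≤ (cos δ - 1) * (cos φm) ^ 2 + 1 := by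
  obtain ⟨h1l, h1r⟩ := h1
  obtain ⟨h2l, h2r⟩ := h2
  have hpi : π / 18 ≤ π / 2 := by
    have := Real.pi_pos; nlinarith
  have hm2 : φm ≤ π / 2 := le_trans hφm' hpi
  have hcm : 0 ≤ cos φm := Real.cos_nonneg_of_mem_Icc ⟨by linarith [Real.pi_pos], hm2⟩
  have key : ∀ x : ℝ, -φm ≤ x → x ≤ φm → cos φm ≤ cos x := by
    intro x hxl hxr
    rw [← Real.cos_abs x]
    apply Real.cos_le_cos_of_nonneg_of_le_pi (abs_nonneg x)
      (by linarith [Real.pi_pos])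
      (abs_le.mpr ⟨hxl, hxr⟩)
  have k1 := key φ1 h1l h1r
  have k2 := key φ2 h2l h2r
  have hprod : cos φm ^ 2 ≤ cos φ1 * cos φ2 := by nlinarith
  have hδ : cos δ - 1 ≤ 0 := by linarith [Real.cos_le_one δ]
  have hsub : cos (φ1 - φ2) ≤ 1 := Real.cos_le_one _
  rw [Real.cos_sub] at hsub
  nlinarith
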